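/- Let G be a simple graph that has an interval representation, let v and w be adjacent vertices of G, and let P be a path in G from v to w with no inner chords. Then P has at most one inner vertex. -/

import Mathlib

open SimpleGraph

variable {V : Type*}

/-- An interval representation of a simple graph: each vertex gets a closed real
interval `[l u, r u]` with `l u < r u`, and two distinct vertices are adjacent
iff their intervals intersect. -/
structure IntervalRep (G : SimpleGraph V) where
  l : V → ℝ
  r : V → ℝ
  lt : ∀ u, l u < r u
  adj_iff : ∀ u v, u ≠ v →
    (G.Adj u v ↔ (Set.Icc (l u) (r u) ∩ Set.Icc (l v) (r v)).Nonempty)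

/-- A path in `G` together with its two end-vertices. -/
structure IndexedPath (G : SimpleGraph V) where
  a : V
  b : V
  walk : G.Walk a b
  isPath : walk.IsPath

namespace IndexedPath

variable {G : SimpleGraph V}

/-- The set of end-vertices of the path. -/
def ends (P : IndexedPath G) : Set V := {P.a, P.b}

/-- `v` is an inner vertex of `P`, i.e. a vertex of `P` other than its ends. -/
def IsInner (P : IndexedPath G) (v : V) : Prop :=
  v ∈ P.walk.support.tail.dropLast

/-- `P` has no inner chords: any edge between two of its vertices is either an
edge of the path itself or the edge between its two end-vertices. -/
def NoInnerChords (P : IndexedPath G) : Prop :=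
  ∀ x y, x ∈ P.walk.support → y ∈ P.walk.support → G.Adj x y →
    s(x, y) ∈ P.walk.edges ∨ s(x, y) = s(P.a, P.b)

/-- `P` joins the vertices `x` and `y`. -/
def Joins (P : IndexedPath G) (x y : V) : Prop :=
  (P.a = x ∧ P.b = y) ∨ (P.a = y ∧ P.b = x)

end IndexedPath

/-- A family of pairwise distinct paths is mutually induced if: (i) each path has
no inner chords; (ii) two distinct paths share only vertices that are ends of both;
(iii) no inner vertex of one path is adjacent to a vertex `v` of another path,
except when `v` is an end-vertex of both paths. -/
def MutuallyInduced {G : SimpleGraph V} {ι : Type*} (P : ι → IndexedPath G) : Prop :=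
  (∀ i j, i ≠ j → P i ≠ P j) ∧
  (∀ i, (P i).NoInnerChords) ∧
  (∀ i j, i ≠ j → ∀ v, v ∈ (P i).walk.support → v ∈ (P j).walk.support →
      v ∈ (P i).ends ∧ v ∈ (P j).ends) ∧
  (∀ i j, i ≠ j → ∀ u v, (P i).IsInner u → v ∈ (P j).walk.support → G.Adj u v →
      v ∈ (P i).ends ∧ v ∈ (P j).ends)

/-- The covered interval of a path: the union of the intervals of its inner vertices. -/
def coveredInterval {G : SimpleGraph V} (ρ : IntervalRep G) (P : IndexedPath G) : Set ℝ :=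
  ⋃ v ∈ {w : V | P.IsInner w}, Set.Icc (ρ.l v) (ρ.r v)

/-- A solution to Requirement Induced Disjoint Paths: `l = r 1 + ... + r k`
mutually induced paths, exactly `r i` of which join `s i` and `t i`. -/
def RIDPSolution {G : SimpleGraph V} (k : ℕ) (s t : Fin k → V) (r : Fin k → ℕ)
    {l : ℕ} (P : Fin l → IndexedPath G) : Prop :=
  l = ∑ i, r i ∧ MutuallyInduced P ∧
    ∀ i, Nat.card {j : Fin l // (P j).Joins (s i) (t i)} = r i


private lemma edge_head'_st6 {V : Type*} {G : SimpleGraph V} {a b : V} (w : G.Walk a b)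
    (hw : w.IsPath) (x : V) (hx : s(a, x) ∈ w.edges) :
    w.support.tail.head? = some x := by
  cases w with
  | nil => simp at hx
  | @cons _ c _ h q =>
    rw [Walk.edges_cons, List.mem_cons] at hx
    rw [Walk.cons_isPath_iff] at hw
    rw [Walk.support_cons, List.tail_cons, q.support_eq_cons, List.head?_cons,
      Option.some.injEq]
    rcases hx with heq | hmem
    · rw [Sym2.eq_iff] at heq
      rcases heq with ⟨-, rfl⟩ | ⟨rfl, rfl⟩
      · rfl
      · exact absurd q.start_mem_support hw.2
    · exact absurd (q.fst_mem_support_of_mem_edges hmem) hw.2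

private lemma chain_same'_st6 {α : Type*} (Q : α → Prop) (R : α → α → Prop) :
    ∀ (K : List α) (z : α), List.Chain R z K →
      (∀ x ∈ z :: K, ∀ y ∈ z :: K, R x y → (Q x ↔ Q y)) → ∀ x ∈ K, (Q x ↔ Q z) := by
  intro K
  induction K with
  | nil => simp
  | cons w K ih =>
    intro z hc h x hx
    rcases List.chain_cons.mp hc with ⟨hzw, hc'⟩
    have hwz : Q w ↔ Q z := (h z (by simp) w (by simp) hzw).symm
    rcases List.mem_cons.mp hx with rfl | hx'
    · exact hwz
    · exact (ih w hc'
        (fun u hu v hv => h u (List.mem_cons_of_mem z hu) v (List.mem_cons_of_mem z hv))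
        x hx').trans hwz


/-- in an interval graph, a path without inner chords joining two
adjacent vertices has at most one inner vertex. -/
theorem statement6 {V : Type*} (G : SimpleGraph V) (ρ : IntervalRep G)
    (P : IndexedPath G) (hadj : G.Adj P.a P.b) (hnc : P.NoInnerChords) :
    P.walk.support.tail.dropLast.length ≤ 1 := by
  by_contra hle
  push_neg at hle
  obtain ⟨a, b, w, hw⟩ := P
  simp only [IndexedPath.NoInnerChords] at hnc
  simp only at hadj hle hnc ⊢
  set inner := w.support.tail.dropLast with hinner_def
  have hab : a ≠ b := hadj.ne
  have hlt := ρ.lt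
  -- structure of the support
  have htail_ne : w.support.tail ≠ [] := by
    intro h
    rw [hinner_def, h] at hle; simp at hle
  have hg1 : w.support.getLast? = some b := by
    rw [List.getLast?_eq_getLast (l := w.support) (by simp), w.getLast_support]
  have htail_last : w.support.tail.getLast htail_ne = b := by
    have h2 : w.support.tail.getLast? = some b := by
      rw [w.support_eq_cons] at hg1
      rcases he : w.support.tail with _ | ⟨c, r⟩
      · exact absurd he htail_ne
      · rw [he, List.getLast?_cons_cons] at hg1
        exact hg1
    rw [List.getLast?_eq_getLast htail_ne] at h2
    exact Option.some.inj h2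
  have hsplit : w.support.tail = inner ++ [b] := by
    conv_lhs => rw [← List.dropLast_append_getLast htail_ne]
    rw [htail_last]
  have hfull : w.support = a :: (inner ++ [b]) := by
    rw [w.support_eq_cons, hsplit]
  -- inner = x1 :: t with t ≠ []
  obtain ⟨x1, t, ht⟩ : ∃ x1 t, inner = x1 :: t := by
    rcases hi : inner with _ | ⟨x1, t⟩
    · rw [hi] at hle; simp at hle
    · exact ⟨x1, t, rfl⟩
  have htne : t ≠ [] := by
    intro h; rw [ht, h] at hle; simp at hle
  set xm := t.getLast htne with hxm_def
  have hxm_mem_t : xm ∈ t := List.getLast_mem htne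
  have hxm_mem : xm ∈ inner := by rw [ht]; exact List.mem_cons_of_mem _ hxm_mem_t
  have hx1_mem : x1 ∈ inner := by rw [ht]; exact List.mem_cons_self
  -- nodup facts
  have hnd : (a :: (inner ++ [b])).Nodup := hfull ▸ hw.support_nodup
  have ha_not : a ∉ inner := fun h => (List.nodup_cons.mp hnd).1 (List.mem_append_left _ h)
  have hb_not : b ∉ inner := by
    have h2 := (List.nodup_cons.mp hnd).2
    rw [List.nodup_append'] at h2
    exact fun h => h2.2.2 h (List.mem_singleton_self b)
  have hinner_nd : inner.Nodup := by
    have h2 := (List.nodup_cons.mp hnd).2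
    rw [List.nodup_append] at h2
    exact h2.1
  have hx1_ne_xm : x1 ≠ xm := by
    rw [ht] at hinner_nd
    intro h
    exact (List.nodup_cons.mp hinner_nd).1 (h ▸ hxm_mem_t)
  -- chain facts
  have hchain : List.Chain' G.Adj (a :: (inner ++ [b])) := hfull ▸ w.isChain_adj_support
  have hchain1 : List.Chain' G.Adj (inner ++ [b]) := hchain.tail
  have hadj_ax1 : G.Adj a x1 := by
    rw [ht] at hchain
    exact hchain.rel_head
  have hadj_xmb : G.Adj xm b := by
    rcases List.isChain_append.mp hchain1 with ⟨-, -, h3⟩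
    refine h3 xm ?_ b rfl
    rw [ht, List.getLast?_eq_getLast (List.cons_ne_nil _ _), List.getLast_cons htne]
    rfl
  have hchain_inner : List.Chain G.Adj x1 t := by
    have h4 := hchain1.left_of_append
    rw [ht] at h4
    exact h4
  -- membership in support
  have hmem_sup : ∀ x ∈ inner, x ∈ w.support := by
    intro x hx
    rw [hfull]
    exact List.mem_cons_of_mem _ (List.mem_append_left _ hx)
  -- non-adjacency facts
  have hne_head : ∀ x ∈ inner, x ≠ x1 → ¬ G.Adj a x := by
    intro x hx hne hax
    rcases hnc a x w.start_mem_support (hmem_sup x hx) hax with he | he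
    · have h1 := edge_head'_st6 w hw x he
      rw [hsplit, ht] at h1
      simp only [List.cons_append, List.head?_cons, Option.some.injEq] at h1
      exact hne h1.symm
    · rw [Sym2.eq_iff] at he
      rcases he with ⟨-, rfl⟩ | ⟨rfl, -⟩
      · exact hb_not hx
      · exact hab rfl
  have hne_last : ∀ x ∈ inner, x ≠ xm → ¬ G.Adj x b := by
    intro x hx hne hxb
    rcases hnc x b (hmem_sup x hx) w.end_mem_support hxb with he | he
    · have he' : s(b, x) ∈ w.reverse.edges := by
        rw [Walk.edges_reverse, List.mem_reverse, Sym2.eq_swap]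
        exact he
      have h1 := edge_head'_st6 w.reverse hw.reverse x he'
      rw [Walk.support_reverse, hfull, ht] at h1
      have h2 : t.reverse.head? = some xm := by
        rw [List.head?_reverse, List.getLast?_eq_getLast htne]
      rcases hrev : t.reverse with _ | ⟨y, r⟩
      · rw [hrev] at h2; simp at h2
      · rw [hrev] at h2
        simp only [List.head?_cons, Option.some.injEq] at h2
        simp [hrev] at h1
        exact hne (h1 ▸ h2)
    · rw [Sym2.eq_iff] at he
      rcases he with ⟨rfl, -⟩ | ⟨rfl, -⟩
      · exact ha_not hx
      · exact hb_not hx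
  -- interval setup
  obtain ⟨p, hpa, hpb⟩ := (ρ.adj_iff a b hab).mp hadj
  have avoid : ∀ x ∈ inner, p ∉ Set.Icc (ρ.l x) (ρ.r x) := by
    intro x hx hpx
    by_cases hxx1 : x = x1
    · subst hxx1
      have hnadj : ¬ G.Adj x b := hne_last x hx hx1_ne_xm
      have hxb : x ≠ b := fun h => hb_not (h ▸ hx)
      exact hnadj ((ρ.adj_iff x b hxb).mpr ⟨p, hpx, hpb⟩)
    · have hnadj : ¬ G.Adj a x := hne_head x hx hxx1
      have hax : a ≠ x := fun h => ha_not (h ▸ hx)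
      exact hnadj ((ρ.adj_iff a x hax).mpr ⟨p, hpa, hpx⟩)
  -- same side propagation
  have hside : ∀ x ∈ inner, (ρ.r x < p ↔ ρ.r x1 < p) := by
    intro x hx
    rw [ht] at hx
    rcases List.mem_cons.mp hx with rfl | hx'
    · rfl
    · refine chain_same'_st6 (fun u => ρ.r u < p) G.Adj t x1 hchain_inner ?_ x hx'
      intro u hu v hv huv
      have hu' : u ∈ inner := by rw [ht]; exact hu
      have hv' : v ∈ inner := by rw [ht]; exact hv
      obtain ⟨c, hcu, hcv⟩ := (ρ.adj_iff u v huv.ne).mp huv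
      have hau := avoid u hu'
      have hav := avoid v hv'
      rw [Set.mem_Icc, not_and_or, not_le, not_le] at hau hav
      rw [Set.mem_Icc] at hcu hcv
      rcases hau with hau | hau <;> rcases hav with hav | hav <;>
        constructor <;> intro hh <;>
        linarith [hcu.1, hcu.2, hcv.1, hcv.2, hlt u, hlt v]
  -- final contradiction
  rw [Set.mem_Icc] at hpa hpb
  obtain ⟨tp, htp1, htp2⟩ :=
    (ρ.adj_iff a x1 (fun h => ha_not (h ▸ hx1_mem))).mp hadj_ax1
  obtain ⟨q, hq1, hq2⟩ :=
    (ρ.adj_iff xm b (fun h => hb_not (h ▸ hxm_mem))).mp hadj_xmb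
  rw [Set.mem_Icc] at htp1 htp2 hq1 hq2
  have hx1_avoid := avoid x1 hx1_mem
  have hxm_avoid := avoid xm hxm_mem
  rw [Set.mem_Icc, not_and_or, not_le, not_le] at hx1_avoid hxm_avoid
  have hQ : ρ.r xm < p ↔ ρ.r x1 < p := hside xm hxm_mem
  have hdisj1 : ∀ z, z ∈ Set.Icc (ρ.l x1) (ρ.r x1) → z ∈ Set.Icc (ρ.l b) (ρ.r b) → False :=
    fun z h1 h2 => hne_last x1 hx1_mem hx1_ne_xm
      ((ρ.adj_iff x1 b (fun h => hb_not (h ▸ hx1_mem))).mpr ⟨z, h1, h2⟩)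
  have hdisj2 : ∀ z, z ∈ Set.Icc (ρ.l a) (ρ.r a) → z ∈ Set.Icc (ρ.l xm) (ρ.r xm) → False :=
    fun z h1 h2 => hne_head xm hxm_mem (fun h => hx1_ne_xm h.symm)
      ((ρ.adj_iff a xm (fun h => ha_not (h ▸ hxm_mem))).mpr ⟨z, h1, h2⟩)
  rcases hx1_avoid with hx1l | hx1r
  · -- p < l x1 : everything on the right of p
    have hnr : ¬ ρ.r x1 < p := by linarith [hlt x1]
    have hxml : p < ρ.l xm := by
      rcases hxm_avoid with h | h
      · exact h
      · exact absurd (hQ.mp h) hnr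
    have h1 : ρ.r b < ρ.l x1 := by
      by_contra hh
      push_neg at hh
      exact hdisj1 (ρ.l x1) ⟨le_refl _, (hlt x1).le⟩ ⟨by linarith [hpb.1], hh⟩
    have h2 : ρ.r a < ρ.l xm := by
      by_contra hh
      push_neg at hh
      exact hdisj2 (ρ.l xm) ⟨by linarith [hpa.1], hh⟩ ⟨le_refl _, (hlt xm).le⟩
    linarith [htp2.1, htp1.2, hq2.2, hq1.1]
  · -- r x1 < p : everything on the left of p
    have hxmr : ρ.r xm < p := hQ.mpr hx1r
    have h1 : ρ.r x1 < ρ.l b := by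
      by_contra hh
      push_neg at hh
      exact hdisj1 (ρ.r x1) ⟨(hlt x1).le, le_refl _⟩ ⟨hh, by linarith [hpb.2]⟩
    have h2 : ρ.r xm < ρ.l a := by
      by_contra hh
      push_neg at hh
      exact hdisj2 (ρ.r xm) ⟨hh, by linarith [hpa.2]⟩ ⟨(hlt xm).le, le_refl _⟩
    linarith [htp1.1, htp2.2, hq1.2, hq2.1]
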